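/- Let K be an algebraically closed valued field with valuation ring 𝒪, maximal ideal 𝓜, residue map res, and a coefficient field k ⊆ 𝒪 (so res is the identity on k). Suppose the transcendence degree of K over k is κ. Then 𝓜 contains a subset of cardinality κ that is algebraically independent over k; in other words, 𝓜 = res⁻¹(0) contains a transcendence basis of K over k. -/

import Mathlib

open Cardinal Polynomial

section Aux

variable {F K : Type*} [Field F] [Field K] [Algebra F K]

/-- `z` is algebraic over the set `A` of coefficients. -/
def AlgOverSet (A : Set K) (z : K) : Prop :=
  ∃ p : K[X], p ≠ 0 ∧ (∀ n, p.coeff n ∈ A) ∧ Polynomial.eval z p = 0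

theorem isAlgebraic_iff_algOverSet_aux {R : Type*} [CommRing R] [Algebra R K]
    (hinj : Function.Injective (algebraMap R K)) {A : Set K}
    (hA : ∀ x, x ∈ A ↔ ∃ r : R, algebraMap R K r = x) (z : K) :
    IsAlgebraic R z ↔ AlgOverSet A z := by
  constructor
  · rintro ⟨q, hq, hqz⟩
    refine ⟨q.map (algebraMap R K), fun h => hq ?_, fun n => ?_, ?_⟩
    · exact Polynomial.map_injective _ hinj (by rw [h, Polynomial.map_zero])
    · rw [Polynomial.coeff_map]
      exact (hA _).2 ⟨q.coeff n, rfl⟩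
    · rw [Polynomial.eval_map, ← Polynomial.aeval_def, hqz]
  · rintro ⟨p, hp, hpA, hpz⟩
    have h : ∀ n, p.coeff n ∈ Set.range (algebraMap R K) := by
      intro n
      obtain ⟨r, hr⟩ := (hA _).1 (hpA n)
      exact ⟨r, hr⟩
    obtain ⟨q, hq⟩ := (Polynomial.lifts_iff_coeff_lifts p).2 h
    replace hq : q.map (algebraMap R K) = p := hq
    refine ⟨q, fun h0 => hp ?_, ?_⟩
    · rw [← hq, h0, Polynomial.map_zero]
    · rw [Polynomial.aeval_def, ← Polynomial.eval_map, hq, hpz]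

theorem isAlgebraic_subalgebra_iff (T : Subalgebra F K) (z : K) :
    IsAlgebraic (↥T) z ↔ AlgOverSet (T : Set K) z := by
  refine isAlgebraic_iff_algOverSet_aux ?_ ?_ z
  · intro a b h
    exact Subtype.val_injective h
  · intro x
    exact ⟨fun hx => ⟨⟨x, hx⟩, rfl⟩, by rintro ⟨r, rfl⟩; exact r.2⟩

theorem isAlgebraic_intermediateField_iff (L : IntermediateField F K) (z : K) :
    IsAlgebraic (↥L) z ↔ AlgOverSet (L : Set K) z := by
  refine isAlgebraic_iff_algOverSet_aux ?_ ?_ z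
  · intro a b h
    exact Subtype.val_injective h
  · intro x
    exact ⟨fun hx => ⟨⟨x, hx⟩, rfl⟩, by rintro ⟨r, rfl⟩; exact r.2⟩

/-- Clearing denominators: algebraic over the field generated by `S` implies algebraic over
the subalgebra generated by `S`. -/
theorem algOverSet_adjoin_of_field {S : Set K} {z : K}
    (h : AlgOverSet ((IntermediateField.adjoin F S : IntermediateField F K) : Set K) z) :
    AlgOverSet ((Algebra.adjoin F S : Subalgebra F K) : Set K) z := by
  classical
  obtain ⟨p, hp, hpA, hpz⟩ := h
  have key : ∀ n, ∃ yz : K × K, yz.1 ∈ Algebra.adjoin F S ∧ yz.2 ∈ Algebra.adjoin F S ∧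
      yz.2 ≠ 0 ∧ p.coeff n = yz.1 / yz.2 := by
    intro n
    by_cases h0 : p.coeff n = 0
    · exact ⟨(0, 1), zero_mem _, one_mem _, one_ne_zero, by simp [h0]⟩
    · have h1 : p.coeff n ∈ Subfield.closure (Set.range (algebraMap F K) ∪ S) := hpA n
      obtain ⟨y, hy, w, hw, hdiv⟩ := Subfield.mem_closure_iff.1 h1
      have hw0 : w ≠ 0 := by
        rintro rfl
        rw [div_zero] at hdiv
        exact h0 hdiv.symm
      exact ⟨(y, w), (Algebra.mem_adjoin_iff).2 hy, (Algebra.mem_adjoin_iff).2 hw, hw0,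
        hdiv.symm⟩
  choose c hc1 hc2 hc3 hc4 using key
  set d : K := ∏ n ∈ p.support, (c n).2 with hd
  have hd0 : d ≠ 0 := Finset.prod_ne_zero_iff.2 fun n _ => hc3 n
  refine ⟨C d * p, mul_ne_zero (by simpa using hd0) hp, fun n => ?_, ?_⟩
  · rw [Polynomial.coeff_C_mul]
    by_cases hn : n ∈ p.support
    · have hrw : d = (c n).2 * ∏ m ∈ p.support.erase n, (c m).2 :=
        (Finset.mul_prod_erase _ _ hn).symm
      have hcalc : d * p.coeff n = (∏ m ∈ p.support.erase n, (c m).2) * (c n).1 := by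
        rw [hc4 n, hrw]
        calc (c n).2 * (∏ m ∈ p.support.erase n, (c m).2) * ((c n).1 / (c n).2)
            = (∏ m ∈ p.support.erase n, (c m).2) * (c n).1 * ((c n).2 / (c n).2) := by ring
          _ = (∏ m ∈ p.support.erase n, (c m).2) * (c n).1 := by
              rw [div_self (hc3 n), mul_one]
      rw [hcalc]
      exact mul_mem (prod_mem fun m _ => hc2 m) (hc1 n)
    · rw [Polynomial.notMem_support_iff.1 hn, mul_zero]
      exact zero_mem _
  · rw [Polynomial.eval_mul, hpz, mul_zero]

/-- Core exchange lemma: if `w` is algebraically independent, `u ⊆ w` and `z ∈ w \ u`, then `z`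
is not algebraic over the field generated by `u`. -/
theorem not_algOverSet_of_algebraicIndependent {w : Set K}
    (hw : AlgebraicIndependent F ((↑) : w → K)) {u : Set K} (hu : u ⊆ w) {z : K}
    (hz : z ∈ w) (hzu : z ∉ u) :
    ¬ AlgOverSet ((IntermediateField.adjoin F u : IntermediateField F K) : Set K) z := by
  have hcu : AlgebraicIndependent F ((↑) : u → K) := by
    have := hw.comp (Set.inclusion hu) (Set.inclusion_injective hu)
    exact this
  have hopt : AlgebraicIndependent F (fun o : Option ↥u => o.elim z ((↑) : u → K)) := by
    have he : Function.Injective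
        (fun o : Option ↥u => o.elim (⟨z, hz⟩ : ↥w) (Set.inclusion hu)) := by
      rintro (_ | a) (_ | b) hab
      · rfl
      · have h1 : z = (b : K) := congrArg (Subtype.val : ↥w → K) hab
        exact absurd (by rw [h1]; exact b.2) hzu
      · have h1 : (a : K) = z := congrArg (Subtype.val : ↥w → K) hab
        exact absurd (by rw [← h1]; exact a.2) hzu
      · have h1 : (a : K) = (b : K) := congrArg (Subtype.val : ↥w → K) hab
        rw [Subtype.ext h1]
    have := hw.comp _ he
    convert this using 1
    funext o
    cases o <;> rfl
  have htr := (hcu.option_iff_transcendental z).1 hopt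
  rw [Subtype.range_coe] at htr
  intro halg
  exact htr ((isAlgebraic_subalgebra_iff _ _).2 (algOverSet_adjoin_of_field halg))

end Aux

/-- If `K` is an algebraically closed valued field with coefficient field `k` and
`trdeg(K/k) = κ`, then the maximal ideal `𝓜 = {x | v x < 1}` of the valuation ring contains
a transcendence basis of `K` over `k`, of cardinality `κ`. -/
theorem stmt5 {K : Type*} [Field K] [IsAlgClosed K] (O : ValuationSubring K)
    (k : Subfield K) (hk : ∀ a ∈ k, a ∈ O)
    (hres : ∀ x ∈ O, ∃ b ∈ k, O.valuation (x - b) < 1)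
    {κ : Cardinal}
    (htr : ∃ s : Set K, IsTranscendenceBasis k ((↑) : s → K) ∧ #s = κ) :
    ∃ s : Set K, (∀ x ∈ s, O.valuation x < 1) ∧
      IsTranscendenceBasis k ((↑) : s → K) ∧ #s = κ := by
  classical
  obtain ⟨s, hs, hcard⟩ := htr
  -- the replacement function
  have hgex : ∀ x : K, ∃ y : K, O.valuation y < 1 ∧
      y ∈ IntermediateField.adjoin (↥k) {x} ∧ x ∈ IntermediateField.adjoin (↥k) {y} ∧
      ((∃ b ∈ k, y = x - b) ∨ y = x⁻¹) := by
    intro x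
    by_cases hx : x ∈ O
    · obtain ⟨b, hbk, hbv⟩ := hres x hx
      have hbmem : ∀ L : IntermediateField (↥k) K, b ∈ L := fun L => L.algebraMap_mem ⟨b, hbk⟩
      refine ⟨x - b, hbv, sub_mem (IntermediateField.mem_adjoin_simple_self (↥k) x) (hbmem _),
        ?_, Or.inl ⟨b, hbk, rfl⟩⟩
      have := add_mem (IntermediateField.mem_adjoin_simple_self (↥k) (x - b)) (hbmem
        (IntermediateField.adjoin (↥k) {x - b}))
      simpa using this
    · have hv : 1 < O.valuation x := lt_of_not_ge (by
        rwa [ValuationSubring.valuation_le_one_iff])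
      refine ⟨x⁻¹, ?_, inv_mem (IntermediateField.mem_adjoin_simple_self (↥k) x), ?_, Or.inr rfl⟩
      · rw [map_inv₀]
        exact (inv_lt_one₀ (zero_lt_one.trans hv)).2 hv
      · have := inv_mem (IntermediateField.mem_adjoin_simple_self (↥k) x⁻¹)
        simpa using this
  choose g hgv hgmem₁ hgmem₂ hgcase using hgex
  set y : ↥s → K := fun i => g ↑i with hy
  -- y i is algebraic over any field over which g i is algebraic
  have hyalg : ∀ (L : IntermediateField (↥k) K) (x : K), IsAlgebraic (↥L) (g x) →
      IsAlgebraic (↥L) x := by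
    intro L x halg
    rcases hgcase x with ⟨b, hbk, hgb⟩ | hgb
    · have hbL : b ∈ L := L.algebraMap_mem ⟨b, hbk⟩
      have haev : Polynomial.aeval x (X - C (⟨b, hbL⟩ : ↥L)) = g x := by
        rw [map_sub, aeval_X, aeval_C, hgb]; rfl
      rw [← haev] at halg
      refine halg.of_aeval _ (by simp) ?_
      rw [(monic_X_sub_C _).leadingCoeff]
      exact Submonoid.one_mem _
    · rw [hgb] at halg
      exact IsAlgebraic.inv_iff.1 halg
  -- injectivity of y
  have hyinj : Function.Injective y := by
    intro i j hij
    by_contra hne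
    have hne' : (j : K) ≠ (i : K) := fun h => hne (Subtype.ext h.symm)
    have h1 : (j : K) ∈ IntermediateField.adjoin (↥k) {(i : K)} := by
      have h2 : g ↑j ∈ IntermediateField.adjoin (↥k) {(i : K)} := by
        have := hgmem₁ (i : K)
        rwa [show g (i : K) = g (j : K) from hij] at this
      exact (IntermediateField.adjoin_le_iff.2 (Set.singleton_subset_iff.2 h2)) (hgmem₂ (j : K))
    refine not_algOverSet_of_algebraicIndependent hs.1 (Set.singleton_subset_iff.2 i.2) j.2
      (by simpa using hne') ?_
    refine ⟨X - C (j : K), X_sub_C_ne_zero _, fun n => ?_, by simp⟩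
    rcases n with _ | n
    · simpa using neg_mem h1
    · rcases n with _ | n
      · simpa using one_mem _
      · simp only [Polynomial.coeff_sub, Polynomial.coeff_X, Polynomial.coeff_C]
        norm_num
  -- algebraic independence of the family y
  have hyalgind : AlgebraicIndependent (↥k) y := by
    refine algebraicIndependent_of_finite_type'
      (show Function.Injective (algebraMap (↥k) K) from fun a b h => Subtype.val_injective h)
      fun u _ _ i hiu => ?_
    set S : Set K := Subtype.val '' (u : Set ↥s) with hS
    have hSsub : S ⊆ s := by rintro _ ⟨j, _, rfl⟩; exact j.2
    have hiS : (i : K) ∉ S := by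
      rintro ⟨j, hj, hji⟩
      exact hiu (Subtype.ext hji ▸ hj)
    intro halg
    set L : IntermediateField (↥k) K := IntermediateField.adjoin (↥k) S with hL
    have hLle : Algebra.adjoin (↥k) (y '' u) ≤ L.toSubalgebra := by
      refine Algebra.adjoin_le ?_
      rintro _ ⟨j, hj, rfl⟩
      have : g (j : K) ∈ IntermediateField.adjoin (↥k) {(j : K)} := hgmem₁ (j : K)
      exact (IntermediateField.adjoin_le_iff.2 (Set.singleton_subset_iff.2
        (IntermediateField.subset_adjoin _ _ (Set.mem_image_of_mem Subtype.val hj)))) this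
    have halg2 : IsAlgebraic (↥L.toSubalgebra) (y i) := halg.tower_top_of_subalgebra_le hLle
    have halg3 : IsAlgebraic (↥L) (y i) :=
      (isAlgebraic_intermediateField_iff L _).2 ((isAlgebraic_subalgebra_iff _ _).1 halg2)
    have halg4 : IsAlgebraic (↥L) ((i : ↥s) : K) := hyalg L _ halg3
    exact not_algOverSet_of_algebraicIndependent hs.1 hSsub (i : ↥s).2 hiS
      ((isAlgebraic_intermediateField_iff L _).1 halg4)
  -- the new set
  refine ⟨Set.range y, ?_, ?_, ?_⟩
  · rintro _ ⟨i, rfl⟩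
    exact hgv _
  swap
  · rw [Cardinal.mk_range_eq _ hyinj, hcard]
  refine ⟨hyalgind.coe_range, ?_⟩
  · -- maximality
    intro w hw hsub
    rw [Subtype.range_coe] at hsub ⊢
    by_contra hne
    obtain ⟨z, hzw, hzt⟩ := Set.exists_of_ssubset (ssubset_iff_subset_ne.2 ⟨hsub, hne⟩)
    have hST : IntermediateField.adjoin (↥k) (Set.range y) = IntermediateField.adjoin (↥k) s := by
      apply le_antisymm
      · rw [IntermediateField.adjoin_le_iff]
        rintro _ ⟨i, rfl⟩
        exact (IntermediateField.adjoin_le_iff.2 (Set.singleton_subset_iff.2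
          (IntermediateField.subset_adjoin _ _ i.2))) (hgmem₁ (i : K))
      · rw [IntermediateField.adjoin_le_iff]
        intro x hx
        have : g x ∈ Set.range y := ⟨⟨x, hx⟩, rfl⟩
        exact (IntermediateField.adjoin_le_iff.2 (Set.singleton_subset_iff.2
          (IntermediateField.subset_adjoin _ _ this))) (hgmem₂ x)
    have halgK : Algebra.IsAlgebraic (↥(IntermediateField.adjoin (↥k) s)) K := by
      have := hs.isAlgebraic_field
      rwa [Subtype.range_coe] at this
    rw [← hST] at halgK
    exact not_algOverSet_of_algebraicIndependent hw hsub hzw hzt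
      ((isAlgebraic_intermediateField_iff _ _).1 (halgK.isAlgebraic z))
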